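/- Let c be a fixed value and consider two-row tableaux with top row constant equal to c and bottom row a word w = (w_1,...,w_n). Define inv(w; c) to be the number of pairs i < j such that the triple (w_j, w_i, c) is 'counterclockwise', i.e., satisfies w_j < w_i ≤ c, or c < w_j < w_i, or w_i ≤ c < w_j. If b = (b_1,...,b_n) is the sorted order (all entries > c in weakly increasing order followed by all entries ≤ c in weakly increasing order), then inv(b; c) = 0, and for any rearrangement w of b, inv(w; c) equals the minimal number of adjacent transpositions needed to obtain w from b. -/

import Mathlib

/-- The triple `(a, b, c)` (configured with `b` above `c` in a column and `a` to the
right of `b`) is counterclockwise. -/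
def ccw (a b c : ℕ) : Prop := (a < b ∧ b ≤ c) ∨ (c < a ∧ a < b) ∨ (b ≤ c ∧ c < a)

instance (a b c : ℕ) : Decidable (ccw a b c) := by unfold ccw; infer_instance

/-- `inv(w; c)`: the number of pairs `i < j` such that `(w j, w i, c)` is
counterclockwise. -/
def invc {n : ℕ} (c : ℕ) (w : Fin n → ℕ) : ℕ :=
  (Finset.univ.filter (fun p : Fin n × Fin n => p.1 < p.2 ∧ ccw (w p.2) (w p.1) c)).card

/-- The Coxeter length of a permutation of `Fin n`: its number of inversions. -/
def permLen {n : ℕ} (σ : Equiv.Perm (Fin n)) : ℕ :=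
  (Finset.univ.filter (fun p : Fin n × Fin n => p.1 < p.2 ∧ σ p.2 < σ p.1)).card

/-- `b` is sorted with respect to `c`: all entries `> c` come first, weakly increasing,
followed by all entries `≤ c`, weakly increasing. -/
def SortedWrt (c : ℕ) {n : ℕ} (b : Fin n → ℕ) : Prop :=
  ∃ k : ℕ, k ≤ n ∧ (∀ i : Fin n, (i : ℕ) < k → c < b i) ∧
    (∀ i : Fin n, k ≤ (i : ℕ) → b i ≤ c) ∧
    (∀ i j : Fin n, i ≤ j → (j : ℕ) < k → b i ≤ b j) ∧
    (∀ i j : Fin n, i ≤ j → k ≤ (i : ℕ) → b i ≤ b j)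

/-- If `b` is the sorted order with respect to `c` then `inv(b; c) = 0`, and for any
rearrangement `w = b ∘ σ` of `b`, `inv(w; c)` equals the minimal number of adjacent
transpositions needed to obtain `w` from `b` (the length of a shortest permutation
carrying `b` to `w`). -/
theorem stmt6 {n : ℕ} (c : ℕ) (b : Fin n → ℕ) (hb : SortedWrt c b) :
    invc c b = 0 ∧
    ∀ σ : Equiv.Perm (Fin n),
      invc c (b ∘ σ) =
        sInf {m : ℕ | ∃ τ : Equiv.Perm (Fin n), b ∘ τ = b ∘ σ ∧ permLen τ = m} := by
  classical
  obtain ⟨k, hkn, hk1, hk2, hk3, hk4⟩ := hb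
  set M : ℕ := Finset.univ.sup b + 1 with hM
  set a : Fin n → ℕ := fun i => if c < b i then b i else b i + M with ha
  have hble : ∀ i : Fin n, b i < M :=
    fun i => Nat.lt_succ_of_le (Finset.le_sup (Finset.mem_univ i))
  -- ccw in terms of the translated values
  have hccw : ∀ i j : Fin n, (ccw (b i) (b j) c ↔ a i < a j) := by
    intro i j
    have hi := hble i; have hj := hble j
    simp only [ha, ccw]
    split_ifs <;> omega
  -- a is injective on equal values of b
  have hainj : ∀ i j : Fin n, a i = a j → b i = b j := by
    intro i j h
    have hi := hble i; have hj := hble j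
    simp only [ha] at h
    split_ifs at h <;> omega
  -- a is monotone
  have hmono : Monotone a := by
    intro i j hij
    have hij' : (i : ℕ) ≤ (j : ℕ) := hij
    simp only [ha]
    rcases lt_or_ge (j : ℕ) k with hjk | hjk
    · have hbi := hk1 i (lt_of_le_of_lt hij' hjk)
      have hbj := hk1 j hjk
      have h3 := hk3 i j hij hjk
      rw [if_pos hbi, if_pos hbj]; exact h3
    · rcases lt_or_ge (i : ℕ) k with hik | hik
      · have hbi := hk1 i hik
        have hbj := hk2 j hjk
        have hi := hble i
        rw [if_pos hbi, if_neg (by omega)]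
        omega
      · have hbi := hk2 i hik
        have hbj := hk2 j (le_trans hik hij')
        have h4 := hk4 i j hij hik
        rw [if_neg (by omega), if_neg (by omega)]
        omega
  -- invc as inversions of a ∘ τ
  have hinv : ∀ τ : Equiv.Perm (Fin n), invc c (b ∘ τ) =
      (Finset.univ.filter
        (fun p : Fin n × Fin n => p.1 < p.2 ∧ a (τ p.2) < a (τ p.1))).card := by
    intro τ
    unfold invc
    congr 1
    apply Finset.filter_congr
    intro p _
    simp only [Function.comp_apply]
    rw [hccw]
  constructor
  · unfold invc
    rw [Finset.card_eq_zero, Finset.filter_eq_empty_iff]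
    rintro p - ⟨hlt, hc⟩
    rw [hccw] at hc
    exact absurd hc (not_lt.mpr (hmono hlt.le))
  intro σ
  set f : Fin n → ℕ := a ∘ σ with hf
  set ρ : Equiv.Perm (Fin n) := Tuple.sort f with hρ
  have hstab := Tuple.eq_sort_iff.mp hρ
  -- f ∘ ρ = a
  have hkey : a ∘ (σ * ρ : Equiv.Perm (Fin n)) = a ∘ (1 : Equiv.Perm (Fin n)) := by
    apply Tuple.unique_monotone
    · rw [Equiv.Perm.coe_mul]
      exact hstab.1
    · rw [Equiv.Perm.coe_one, Function.comp_id]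
      exact hmono
  have hfρ : ∀ x, f (ρ x) = a x := fun x => congrFun hkey x
  -- a ∘ ρ⁻¹ = a ∘ σ
  have haτ : ∀ x, a (ρ⁻¹ x) = a (σ x) := by
    intro x
    have := hfρ (ρ⁻¹ x)
    simpa [hf, Function.comp] using this.symm
  have hbτ : b ∘ (ρ⁻¹ : Equiv.Perm (Fin n)) = b ∘ σ := by
    funext x
    exact hainj _ _ (haτ x)
  -- permLen ρ⁻¹ = invc c (b ∘ σ)
  have hlen : permLen (ρ⁻¹ : Equiv.Perm (Fin n)) = invc c (b ∘ σ) := by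
    rw [hinv σ]
    unfold permLen
    congr 1
    apply Finset.filter_congr
    intro p _
    constructor
    · rintro ⟨hlt, hv⟩
      refine ⟨hlt, ?_⟩
      have h1 : f (ρ (ρ⁻¹ p.2)) ≤ f (ρ (ρ⁻¹ p.1)) := hstab.1 hv.le
      rcases eq_or_lt_of_le h1 with heq | hlt'
      · exfalso
        have := hstab.2 _ _ hv heq
        rw [Equiv.Perm.coe_inv, Equiv.apply_symm_apply, Equiv.apply_symm_apply] at this
        exact absurd this (not_lt.mpr hlt.le)
      · rw [Equiv.Perm.coe_inv, Equiv.apply_symm_apply, Equiv.apply_symm_apply] at hlt'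
        exact hlt'
    · rintro ⟨hlt, hv⟩
      refine ⟨hlt, ?_⟩
      by_contra h
      have h' : ρ⁻¹ p.1 ≤ ρ⁻¹ p.2 := not_lt.mp h
      have := hstab.1 h'
      simp only [Function.comp_apply, Equiv.Perm.coe_inv, Equiv.apply_symm_apply] at this
      exact absurd hv (not_lt.mpr this)
  -- lower bound
  have hlb : ∀ τ' : Equiv.Perm (Fin n), b ∘ τ' = b ∘ σ → invc c (b ∘ σ) ≤ permLen τ' := by
    intro τ' hτ'
    rw [← hτ', hinv τ']
    unfold permLen
    apply Finset.card_le_card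
    intro p hp
    simp only [Finset.mem_filter] at hp ⊢
    refine ⟨hp.1, hp.2.1, ?_⟩
    by_contra h
    have h' : τ' p.1 ≤ τ' p.2 := not_lt.mp h
    exact absurd hp.2.2 (not_lt.mpr (hmono h'))
  apply le_antisymm
  · refine le_csInf ⟨permLen σ, ⟨σ, rfl, rfl⟩⟩ ?_
    rintro m ⟨τ', hτ', rfl⟩
    exact hlb τ' hτ'
  · exact Nat.sInf_le ⟨ρ⁻¹, hbτ, hlen⟩
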